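/- The braidings c satisfy the second hexagon-type identity a ∘ c_{M,N⊗P} ∘ a = (id_{ᴹN} ⊗ c_{M,P}) ∘ a ∘ (c_{M,N}⊗id_P), where a is the Hom-associativity constraint and c_{M,N}(m⊗n) = ν(n₍₀₎)⊗B⁻¹(n₍₁₎)·μ⁻¹(m). -/
import Mathlib


open TensorProduct

/-- A monoidal Hom-Hopf algebra (with bijective antipode) over a field `k`. -/
structure HomHopf (k : Type*) [Field k] (H : Type*) [AddCommGroup H] [Module k H] where
  mul : H →ₗ[k] H →ₗ[k] H
  one : H
  a : H ≃ₗ[k] H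
  comul : H →ₗ[k] H ⊗[k] H
  counit : H →ₗ[k] k
  S : H ≃ₗ[k] H
  hom_assoc : ∀ x y z : H, mul (a x) (mul y z) = mul (mul x y) (a z)
  a_mul : ∀ x y : H, a (mul x y) = mul (a x) (a y)
  mul_one' : ∀ x : H, mul x one = a x
  one_mul' : ∀ x : H, mul one x = a x
  a_one : a one = one
  hom_coassoc : (TensorProduct.map a.symm.toLinearMap comul).comp comul
      = (TensorProduct.assoc k H H H).toLinearMap.comp
          ((TensorProduct.map comul a.symm.toLinearMap).comp comul)
  comul_a : ∀ x : H, comul (a x) = TensorProduct.map a.toLinearMap a.toLinearMap (comul x)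
  counit_comul : ∀ x : H,
    (TensorProduct.lid k H) ((TensorProduct.map counit LinearMap.id) (comul x)) = a.symm x
  comul_counit : ∀ x : H,
    (TensorProduct.rid k H) ((TensorProduct.map LinearMap.id counit) (comul x)) = a.symm x
  counit_a : ∀ x : H, counit (a x) = counit x
  comul_mul : ∀ x y : H, comul (mul x y)
      = (TensorProduct.map (TensorProduct.lift mul) (TensorProduct.lift mul))
          ((TensorProduct.tensorTensorTensorComm k H H H H) (comul x ⊗ₜ[k] comul y))
  comul_one : comul one = one ⊗ₜ[k] one
  counit_mul : ∀ x y : H, counit (mul x y) = counit x * counit y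
  counit_one : counit one = 1
  S_a : ∀ x : H, S (a x) = a (S x)
  antipode_left : ∀ x : H,
    (TensorProduct.lift mul) ((TensorProduct.map S.toLinearMap LinearMap.id) (comul x))
      = counit x • one
  antipode_right : ∀ x : H,
    (TensorProduct.lift mul) ((TensorProduct.map LinearMap.id S.toLinearMap) (comul x))
      = counit x • one

/-- A monoidal Hom-Hopf algebra automorphism. -/
structure IsHomHopfAuto {k : Type*} [Field k] {H : Type*} [AddCommGroup H] [Module k H]
    (HH : HomHopf k H) (f : H ≃ₗ[k] H) : Prop where
  map_mul : ∀ x y : H, f (HH.mul x y) = HH.mul (f x) (f y)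
  map_one : f HH.one = HH.one
  map_comul : ∀ x : H, HH.comul (f x)
      = TensorProduct.map f.toLinearMap f.toLinearMap (HH.comul x)
  map_counit : ∀ x : H, HH.counit (f x) = HH.counit x
  map_a : ∀ x : H, f (HH.a x) = HH.a (f x)

/-- A left-right (A,B)-Yetter-Drinfeld Hom-module over `HH`. -/
structure YDModule {k : Type*} [Field k] {H : Type*} [AddCommGroup H] [Module k H]
    (HH : HomHopf k H) (A B : H ≃ₗ[k] H)
    (M : Type*) [AddCommGroup M] [Module k M] where
  act : H →ₗ[k] M →ₗ[k] M
  coact : M →ₗ[k] M ⊗[k] H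
  mu : M ≃ₗ[k] M
  hom_act : ∀ (h g : H) (m : M), act (HH.a h) (act g m) = act (HH.mul h g) (mu m)
  mu_act : ∀ (h : H) (m : M), mu (act h m) = act (HH.a h) (mu m)
  one_act : ∀ m : M, act HH.one m = mu m
  hom_coact : (TensorProduct.map mu.symm.toLinearMap HH.comul).comp coact
      = (TensorProduct.assoc k M H H).toLinearMap.comp
          ((TensorProduct.map coact HH.a.symm.toLinearMap).comp coact)
  coact_mu : ∀ m : M, coact (mu m)
      = TensorProduct.map mu.toLinearMap HH.a.toLinearMap (coact m)
  coact_counit : ∀ m : M,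
    (TensorProduct.rid k M) ((TensorProduct.map LinearMap.id HH.counit) (coact m)) = mu.symm m
  compat : ∀ (h : H) (m : M) (n : ℕ) (h1 h2 : Fin n → H),
      HH.comul h = ∑ i, h1 i ⊗ₜ[k] h2 i →
      ∀ (p : ℕ) (h21 h22 : Fin n → Fin p → H),
      (∀ i, HH.comul (h2 i) = ∑ j, h21 i j ⊗ₜ[k] h22 i j) →
      ∀ (q : ℕ) (m0 : Fin q → M) (m1 : Fin q → H),
      coact m = ∑ l, m0 l ⊗ₜ[k] m1 l →
      coact (act h m) = ∑ i, ∑ j, ∑ l,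
        act (HH.a (h21 i j)) (m0 l) ⊗ₜ[k]
          HH.mul (HH.mul (B (h22 i j)) (HH.a.symm (m1 l))) (A (HH.S.symm (h1 i)))

theorem my_exists_fin {k : Type*} [Field k] {X : Type*} [AddCommGroup X] [Module k X]
    {Y : Type*} [AddCommGroup Y] [Module k Y] (x : X ⊗[k] Y) :
    ∃ (n : ℕ) (f : Fin n → X) (g : Fin n → Y), x = ∑ i, f i ⊗ₜ[k] g i := by
  obtain ⟨S, h⟩ := TensorProduct.exists_finset x
  refine ⟨S.card, fun i => (S.equivFin.symm i).1.1, fun i => (S.equivFin.symm i).1.2, ?_⟩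
  rw [h, ← Finset.sum_coe_sort S, ← Equiv.sum_comp S.equivFin.symm]

theorem my_mu_symm_act {k : Type*} [Field k] {H : Type*} [AddCommGroup H] [Module k H]
    {M : Type*} [AddCommGroup M] [Module k M] {HH : HomHopf k H} {A B : H ≃ₗ[k] H}
    (YM : YDModule HH A B M) (h : H) (m : M) :
    YM.mu.symm (YM.act h m) = YM.act (HH.a.symm h) (YM.mu.symm m) := by
  apply YM.mu.injective
  rw [YM.mu.apply_symm_apply, YM.mu_act, HH.a.apply_symm_apply, YM.mu.apply_symm_apply]

theorem my_key {k : Type*} [Field k] {H : Type*} [AddCommGroup H] [Module k H]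
    {M : Type*} [AddCommGroup M] [Module k M] {HH : HomHopf k H} {A B : H ≃ₗ[k] H}
    (YM : YDModule HH A B M) (hB : IsHomHopfAuto HH B) (m : M) (x y : H) :
    YM.mu.symm (YM.act (B.symm (HH.mul x y)) m)
      = YM.act (B.symm x) (YM.mu.symm (YM.act (B.symm y) (YM.mu.symm m))) := by
  have hBmul : B.symm (HH.mul x y) = HH.mul (B.symm x) (B.symm y) := by
    apply B.injective
    rw [hB.map_mul, B.apply_symm_apply, B.apply_symm_apply, B.apply_symm_apply]
  have hamul : ∀ u v : H, HH.a.symm (HH.mul u v)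
      = HH.mul (HH.a.symm u) (HH.a.symm v) := by
    intro u v
    apply HH.a.injective
    rw [HH.a_mul, HH.a.apply_symm_apply, HH.a.apply_symm_apply, HH.a.apply_symm_apply]
  rw [my_mu_symm_act, my_mu_symm_act, hBmul, hamul]
  have := YM.hom_act (HH.a.symm (B.symm x)) (HH.a.symm (B.symm y))
    (YM.mu.symm (YM.mu.symm m))
  rw [HH.a.apply_symm_apply, YM.mu.apply_symm_apply] at this
  rw [← this]

/-- Eq. (3.5): a_{ᴹN,ᴹP,M} ∘ c_{M,N⊗P} ∘ a_{M,N,P}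
 = (id_{ᴹN} ⊗ c_{M,P}) ∘ a_{ᴹN,M,P} ∘ (c_{M,N}⊗id_P),
with a_{X,Y,Z}((x⊗y)⊗z) = μX(x)⊗(y⊗μZ⁻¹(z)). -/
theorem stmt_15 {k : Type*} [Field k] {H : Type*} [AddCommGroup H] [Module k H]
    {M : Type*} [AddCommGroup M] [Module k M] {N : Type*} [AddCommGroup N] [Module k N]
    {P : Type*} [AddCommGroup P] [Module k P]
    (HH : HomHopf k H) (A B C D E F : H ≃ₗ[k] H)
    (hA : IsHomHopfAuto HH A) (hB : IsHomHopfAuto HH B)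
    (hC : IsHomHopfAuto HH C) (hD : IsHomHopfAuto HH D)
    (hE : IsHomHopfAuto HH E) (hF : IsHomHopfAuto HH F)
    (YM : YDModule HH A B M) (YN : YDModule HH C D N) (YP : YDModule HH E F P)
    -- c_{M,N⊗P}, where N⊗P has the codiagonal coaction (n⊗p) ↦ (n₍₀₎⊗p₍₀₎)⊗p₍₁₎n₍₁₎
    (cM_NP : (M ⊗[k] (N ⊗[k] P)) →ₗ[k] ((N ⊗[k] P) ⊗[k] M))
    (hcM_NP : ∀ (m : M) (x : N) (pp : P) (q : ℕ) (n0 : Fin q → N) (n1 : Fin q → H),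
      YN.coact x = ∑ l, n0 l ⊗ₜ[k] n1 l →
      ∀ (r : ℕ) (p0 : Fin r → P) (p1 : Fin r → H),
      YP.coact pp = ∑ t, p0 t ⊗ₜ[k] p1 t →
      cM_NP (m ⊗ₜ[k] (x ⊗ₜ[k] pp))
        = ∑ l, ∑ t, (YN.mu (n0 l) ⊗ₜ[k] YP.mu (p0 t)) ⊗ₜ[k]
            YM.act (B.symm (HH.mul (p1 t) (n1 l))) (YM.mu.symm m))
    -- c_{M,N}
    (cMN : (M ⊗[k] N) →ₗ[k] (N ⊗[k] M))
    (hcMN : ∀ (m : M) (x : N) (q : ℕ) (n0 : Fin q → N) (n1 : Fin q → H),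
      YN.coact x = ∑ l, n0 l ⊗ₜ[k] n1 l →
      cMN (m ⊗ₜ[k] x) = ∑ l, YN.mu (n0 l) ⊗ₜ[k] YM.act (B.symm (n1 l)) (YM.mu.symm m))
    -- c_{M,P}
    (cMP : (M ⊗[k] P) →ₗ[k] (P ⊗[k] M))
    (hcMP : ∀ (m : M) (pp : P) (r : ℕ) (p0 : Fin r → P) (p1 : Fin r → H),
      YP.coact pp = ∑ t, p0 t ⊗ₜ[k] p1 t →
      cMP (m ⊗ₜ[k] pp) = ∑ t, YP.mu (p0 t) ⊗ₜ[k] YM.act (B.symm (p1 t)) (YM.mu.symm m)) :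
    ∀ w : (M ⊗[k] N) ⊗[k] P,
      ((TensorProduct.map YN.mu.toLinearMap
          (TensorProduct.map LinearMap.id YM.mu.symm.toLinearMap)) ∘ₗ
        (TensorProduct.assoc k N P M).toLinearMap)
        (cM_NP
          (((TensorProduct.map YM.mu.toLinearMap
              (TensorProduct.map LinearMap.id YP.mu.symm.toLinearMap)) ∘ₗ
            (TensorProduct.assoc k M N P).toLinearMap) w))
      = (TensorProduct.map LinearMap.id cMP)
          (((TensorProduct.map YN.mu.toLinearMap
              (TensorProduct.map LinearMap.id YP.mu.symm.toLinearMap)) ∘ₗ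
            (TensorProduct.assoc k N M P).toLinearMap)
            ((TensorProduct.map cMN LinearMap.id) w)) := by
  intro w
  induction w using TensorProduct.induction_on with
  | zero => simp
  | add u v hu hv => simp only [map_add, hu, hv]
  | tmul mn p =>
    induction mn using TensorProduct.induction_on with
    | zero => simp
    | add u v hu hv => simp only [TensorProduct.add_tmul, map_add, hu, hv]
    | tmul m n =>
      obtain ⟨q, n0, n1, hn⟩ := my_exists_fin (YN.coact n)
      obtain ⟨r, p0, p1, hp⟩ := my_exists_fin (YP.coact (YP.mu.symm p))
      have hL : ((TensorProduct.map YN.mu.toLinearMap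
            (TensorProduct.map LinearMap.id YM.mu.symm.toLinearMap)) ∘ₗ
          (TensorProduct.assoc k N P M).toLinearMap)
          (cM_NP
            (((TensorProduct.map YM.mu.toLinearMap
                (TensorProduct.map LinearMap.id YP.mu.symm.toLinearMap)) ∘ₗ
              (TensorProduct.assoc k M N P).toLinearMap) ((m ⊗ₜ[k] n) ⊗ₜ[k] p)))
          = ∑ l, ∑ t, YN.mu (YN.mu (n0 l)) ⊗ₜ[k] (YP.mu (p0 t) ⊗ₜ[k]
              YM.mu.symm (YM.act (B.symm (HH.mul (p1 t) (n1 l))) m)) := by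
        have harg : ((TensorProduct.map YM.mu.toLinearMap
              (TensorProduct.map LinearMap.id YP.mu.symm.toLinearMap)) ∘ₗ
            (TensorProduct.assoc k M N P).toLinearMap) ((m ⊗ₜ[k] n) ⊗ₜ[k] p)
            = YM.mu m ⊗ₜ[k] (n ⊗ₜ[k] YP.mu.symm p) := by
          simp
        rw [harg, hcM_NP (YM.mu m) n (YP.mu.symm p) q n0 n1 hn r p0 p1 hp]
        simp [map_sum]
      have hR : (TensorProduct.map LinearMap.id cMP)
          (((TensorProduct.map YN.mu.toLinearMap
              (TensorProduct.map LinearMap.id YP.mu.symm.toLinearMap)) ∘ₗ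
            (TensorProduct.assoc k N M P).toLinearMap)
            ((TensorProduct.map cMN LinearMap.id) ((m ⊗ₜ[k] n) ⊗ₜ[k] p)))
          = ∑ l, ∑ t, YN.mu (YN.mu (n0 l)) ⊗ₜ[k] (YP.mu (p0 t) ⊗ₜ[k]
              YM.act (B.symm (p1 t)) (YM.mu.symm (YM.act (B.symm (n1 l))
                (YM.mu.symm m)))) := by
        have h1 : (TensorProduct.map cMN LinearMap.id) ((m ⊗ₜ[k] n) ⊗ₜ[k] p)
            = (∑ l, YN.mu (n0 l) ⊗ₜ[k] YM.act (B.symm (n1 l)) (YM.mu.symm m)) ⊗ₜ[k] p := by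
          rw [TensorProduct.map_tmul, hcMN m n q n0 n1 hn]
          rfl
        rw [h1, TensorProduct.sum_tmul, map_sum, map_sum]
        refine Finset.sum_congr rfl fun l _ => ?_
        simp only [LinearMap.comp_apply, TensorProduct.assoc_tmul,
          TensorProduct.map_tmul, LinearMap.id_coe, id_eq, LinearEquiv.coe_coe,
          LinearMap.coe_comp]
        rw [hcMP _ (YP.mu.symm p) r p0 p1 hp, TensorProduct.tmul_sum]
      rw [hL, hR]
      refine Finset.sum_congr rfl fun l _ => Finset.sum_congr rfl fun t _ => ?_
      rw [my_key YM hB m (p1 t) (n1 l)]
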